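/- Let F be a finite field, let f ∈ F[X] be a polynomial with f(0) ≠ 0, and let R := { β ∈ F⟦X⟧ : ∃ m ∈ ℕ, ∃ p ∈ F[X], f^m · β = p in F⟦X⟧ }. Let G := { AffMap(α, β) : β ∈ R, α ∈ R a unit of the ring R }. Then G is a subgroup of Aut(T_F) which is self-similar, coarsely diagonal, and finite-state. -/

import Mathlib

namespace RoverNekrashevych

/-- The state (section) of `f` at the word `u`. -/
def state {X : Type*} (f : List X → List X) (u : List X) : List X → List X :=
  fun w => (f (u ++ w)).drop u.length

/-- A function on words is finite-state if it has only finitely many states. -/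
def FiniteStateFun {X : Type*} (f : List X → List X) : Prop :=
  Set.Finite {g : List X → List X | ∃ u : List X, g = state f u}

/-- The truncated power series `Σ_{i < length w} w_i X^i` determined by a word. -/
noncomputable def wordToSeries {F : Type*} [CommSemiring F] (w : List F) : PowerSeries F :=
  PowerSeries.mk fun i => w.getD i 0

/-- The affine map `AffMap (α, β)` on words: it sends `(c_0, …, c_{e-1})` to the word of
the first `e` coefficients of `α · (Σ_{i<e} c_i X^i) + β`. -/
noncomputable def affWord {F : Type*} [CommSemiring F] (α β : PowerSeries F) (w : List F) :
    List F :=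
  List.ofFn fun i : Fin w.length => PowerSeries.coeff i (α * wordToSeries w + β)

/-- `f` is an automorphism of the infinite rooted tree with vertex set `List X`. -/
def IsTreeAut {X : Type*} (f : Equiv.Perm (List X)) : Prop :=
  f [] = [] ∧ ∀ (u : List X) (x : X), ∃ y : X, f (u ++ [x]) = f u ++ [y]

/-- `G` consists of tree automorphisms. -/
def IsTreeAutGroup {X : Type*} (G : Subgroup (Equiv.Perm (List X))) : Prop :=
  ∀ f ∈ G, IsTreeAut f

/-- `G` is self-similar: all states of elements of `G` are realized by elements of `G`. -/
def SelfSimilar {X : Type*} (G : Subgroup (Equiv.Perm (List X))) : Prop :=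
  ∀ f ∈ G, ∀ u : List X, ∃ g ∈ G, ⇑g = state (⇑f) u

/-- `G` is finite-state if all its elements are. -/
def FiniteStateGroup {X : Type*} (G : Subgroup (Equiv.Perm (List X))) : Prop :=
  ∀ f ∈ G, FiniteStateFun ⇑f

/-- `G` is coarsely diagonal: for `g ∈ G`, each state `g_u` is realized by some `g' ∈ G`,
and `g'⁻¹ * g` has finite order. -/
def CoarselyDiagonal {X : Type*} (G : Subgroup (Equiv.Perm (List X))) : Prop :=
  ∀ g ∈ G, ∀ u : List X, ∃ g' ∈ G, ⇑g' = state (⇑g) u ∧ IsOfFinOrder (g'⁻¹ * g)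

/-- The image of the localization `F[X][1/f]` inside `F⟦X⟧`: the ring of `S`-integers for
`S` the places dividing `f` together with the place at infinity. -/
def Rset {F : Type*} [Field F] (f : Polynomial F) : Set (PowerSeries F) :=
  {β | ∃ (m : ℕ) (p : Polynomial F), (f : PowerSeries F) ^ m * β = (p : PowerSeries F)}

/-- The set of affine tree automorphisms `AffMap (α, β)` with `β ∈ R` and `α` a unit of the
ring `R = F[X][1/f] ⊆ F⟦X⟧` (i.e. `α ∈ R` and its inverse in `F⟦X⟧` also lies in `R`). -/
def AGLSet {F : Type*} [Field F] (f : Polynomial F) : Set (Equiv.Perm (List F)) :=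
  {g | ∃ α β : PowerSeries F, PowerSeries.constantCoeff α ≠ 0 ∧
    α ∈ Rset f ∧ α⁻¹ ∈ Rset f ∧ β ∈ Rset f ∧ ⇑g = affWord α β}


open PowerSeries

section Aux
variable {F : Type*} [Field F]

lemma coeff_wordToSeries (w : List F) (n : ℕ) :
    coeff n (wordToSeries w) = w.getD n 0 := coeff_mk n _

lemma length_affWord (α β : PowerSeries F) (w : List F) : (affWord α β w).length = w.length := by
  simp [affWord]

lemma getElem_affWord (α β : PowerSeries F) (w : List F) (i : ℕ)
    (h : i < (affWord α β w).length) :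
    (affWord α β w)[i] = PowerSeries.coeff i (α * wordToSeries w + β) := by
  simp [affWord]

lemma coeff_mul_congr (α s t : PowerSeries F) (i : ℕ)
    (h : ∀ j ≤ i, coeff j s = coeff j t) :
    coeff i (α * s) = coeff i (α * t) := by
  rw [coeff_mul, coeff_mul]
  refine Finset.sum_congr rfl fun p hp => ?_
  rw [Finset.HasAntidiagonal.mem_antidiagonal] at hp
  rw [h p.2 (by omega)]

lemma affWord_comp (α β α' β' : PowerSeries F) (w : List F) :
    affWord α β (affWord α' β' w) = affWord (α * α') (α * β' + β) w := by
  refine List.ext_getElem (by simp [length_affWord]) fun i h1 h2 => ?_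
  rw [getElem_affWord, getElem_affWord]
  have hi : i < w.length := by simpa [length_affWord] using h2
  have key : coeff i (α * wordToSeries (affWord α' β' w))
      = coeff i (α * (α' * wordToSeries w + β')) := by
    refine coeff_mul_congr _ _ _ _ fun j hj => ?_
    rw [coeff_wordToSeries, List.getD_eq_getElem _ _ (by simp [length_affWord]; omega),
      getElem_affWord]
  rw [map_add, map_add, key, show α * (α' * wordToSeries w + β') = (α * α') * wordToSeries w + α * β' by ring, map_add, map_add, add_assoc]

lemma affWord_id (w : List F) : affWord (1 : PowerSeries F) 0 w = w := by
  refine List.ext_getElem (by simp [length_affWord]) fun i h1 h2 => ?_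
  rw [getElem_affWord]
  simp [coeff_wordToSeries, List.getD_eq_getElem _ _ h2, List.getElem?_eq_getElem h2]


noncomputable def shiftk (k : ℕ) (s : PowerSeries F) : PowerSeries F :=
  PowerSeries.mk fun i => coeff (k + i) s

lemma coeff_shiftk (k n : ℕ) (s : PowerSeries F) :
    coeff n (shiftk k s) = coeff (k + n) s := coeff_mk n _

lemma coeff_X_pow_mul' (s : PowerSeries F) (k n : ℕ) :
    coeff n ((X : PowerSeries F) ^ k * s) = if k ≤ n then coeff (n - k) s else 0 := by
  split_ifs with h
  · have h2 := coeff_X_pow_mul s k (n-k)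
    rwa [show (n-k)+k = n by omega] at h2
  · rw [coeff_mul]
    refine Finset.sum_eq_zero fun p hp => ?_
    rw [Finset.HasAntidiagonal.mem_antidiagonal] at hp
    rw [coeff_X_pow, if_neg (by omega), zero_mul]

lemma wordToSeries_append (u w : List F) :
    wordToSeries (u ++ w)
      = wordToSeries u + (X : PowerSeries F) ^ u.length * wordToSeries w := by
  ext n
  rw [map_add, coeff_wordToSeries, coeff_X_pow_mul', coeff_wordToSeries]
  by_cases h : n < u.length
  · rw [if_neg (by omega), List.getD_eq_getElem _ _ (by rw [List.length_append]; omega),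
      List.getD_eq_getElem _ _ h, List.getElem_append_left h, add_zero]
  · rw [if_pos (by omega), List.getD_eq_default u _ (by omega), zero_add,
      coeff_wordToSeries]
    by_cases h2 : n - u.length < w.length
    · rw [List.getD_eq_getElem _ _ (by rw [List.length_append]; omega),
        List.getD_eq_getElem _ _ h2, List.getElem_append_right (by omega)]
    · rw [List.getD_eq_default _ _ (by rw [List.length_append]; omega),
        List.getD_eq_default _ _ (by omega)]

lemma state_affWord (α β : PowerSeries F) (u : List F) :
    state (affWord α β) u = affWord α (shiftk u.length (α * wordToSeries u + β)) := by
  funext w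
  show (affWord α β (u ++ w)).drop u.length = _
  refine List.ext_getElem (by simp [length_affWord]) fun i h1 h2 => ?_
  rw [List.getElem_drop, getElem_affWord, getElem_affWord]
  rw [wordToSeries_append, show α * (wordToSeries u + (X:PowerSeries F) ^ u.length * wordToSeries w) + β
      = (X:PowerSeries F) ^ u.length * (α * wordToSeries w) + (α * wordToSeries u + β) by ring]
  simp only [map_add, coeff_shiftk, coeff_X_pow_mul']
  rw [if_pos (by omega), show u.length + i - u.length = i by omega]


variable {f : Polynomial F}

lemma Rset_coe (p : Polynomial F) : (p : PowerSeries F) ∈ Rset f := ⟨0, p, by simp⟩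
lemma Rset_zero : (0 : PowerSeries F) ∈ Rset f := by simpa using Rset_coe (f := f) 0
lemma Rset_one : (1 : PowerSeries F) ∈ Rset f := by simpa using Rset_coe (f := f) 1

lemma Rset_mul {a b : PowerSeries F} (ha : a ∈ Rset f) (hb : b ∈ Rset f) :
    a * b ∈ Rset f := by
  obtain ⟨m1, p1, h1⟩ := ha; obtain ⟨m2, p2, h2⟩ := hb
  refine ⟨m1 + m2, p1 * p2, ?_⟩
  rw [Polynomial.coe_mul, ← h1, ← h2]; ring

lemma Rset_add {a b : PowerSeries F} (ha : a ∈ Rset f) (hb : b ∈ Rset f) :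
    a + b ∈ Rset f := by
  obtain ⟨m1, p1, h1⟩ := ha; obtain ⟨m2, p2, h2⟩ := hb
  refine ⟨m1 + m2, f ^ m2 * p1 + f ^ m1 * p2, ?_⟩
  rw [Polynomial.coe_add, Polynomial.coe_mul, Polynomial.coe_mul, Polynomial.coe_pow,
    Polynomial.coe_pow, ← h1, ← h2]; ring

lemma Rset_neg {a : PowerSeries F} (ha : a ∈ Rset f) : -a ∈ Rset f := by
  obtain ⟨m, p, h⟩ := ha
  exact ⟨m, -p, by rw [Polynomial.coe_neg, ← h]; ring⟩

lemma Rset_sub {a b : PowerSeries F} (ha : a ∈ Rset f) (hb : b ∈ Rset f) :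
    a - b ∈ Rset f := by
  rw [sub_eq_add_neg]; exact Rset_add ha (Rset_neg hb)

lemma Rset_of_X_mul {γ : PowerSeries F} (h : (X : PowerSeries F) * γ ∈ Rset f) :
    γ ∈ Rset f := by
  obtain ⟨m, p, hp⟩ := h
  have h0 : p.coeff 0 = 0 := by
    have := congrArg (constantCoeff) hp
    simpa [Polynomial.coeff_coe] using this.symm
  refine ⟨m, p.divX, ?_⟩
  have hpX : (p : PowerSeries F) = X * (p.divX : PowerSeries F) := by
    conv_lhs => rw [← Polynomial.X_mul_divX_add p]
    rw [h0, map_zero, add_zero, Polynomial.coe_mul, Polynomial.coe_X]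
  have hX : (X : PowerSeries F) * ((f : PowerSeries F) ^ m * γ)
      = X * (p.divX : PowerSeries F) := by
    rw [← hpX, ← hp]; ring
  exact mul_left_cancel₀ X_ne_zero hX

lemma Rset_of_X_pow_mul {γ : PowerSeries F} (k : ℕ)
    (h : (X : PowerSeries F) ^ k * γ ∈ Rset f) : γ ∈ Rset f := by
  induction k generalizing γ with
  | zero => simpa using h
  | succ n ih =>
    apply Rset_of_X_mul
    apply ih
    have : (X : PowerSeries F) ^ n * (X * γ) = X ^ (n + 1) * γ := by ring
    rw [this]; exact h

lemma trunc_add_shiftk (k : ℕ) (s : PowerSeries F) :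
    ((trunc k s : Polynomial F) : PowerSeries F) + (X : PowerSeries F) ^ k * shiftk k s = s := by
  ext n
  rw [map_add, Polynomial.coeff_coe, coeff_trunc, coeff_X_pow_mul']
  by_cases h : n < k
  · rw [if_pos h, if_neg (by omega), add_zero]
  · rw [if_neg h, if_pos (by omega), coeff_shiftk, zero_add, show k + (n - k) = n by omega]

lemma Rset_shiftk {s : PowerSeries F} (k : ℕ) (hs : s ∈ Rset f) : shiftk k s ∈ Rset f := by
  apply Rset_of_X_pow_mul k
  rw [eq_sub_of_add_eq' (trunc_add_shiftk k s)]
  exact Rset_sub hs (Rset_coe _)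

lemma Rset_wordToSeries (u : List F) : wordToSeries u ∈ Rset f := by
  have : wordToSeries u = ((trunc u.length (wordToSeries u) : Polynomial F) : PowerSeries F) := by
    ext n
    rw [Polynomial.coeff_coe, coeff_trunc, coeff_wordToSeries]
    by_cases h : n < u.length
    · rw [if_pos h]
    · rw [if_neg h, List.getD_eq_default _ _ (by omega)]
  rw [this]; exact Rset_coe _

-- inverse lemmas
lemma ps_inv_unique {α γ : PowerSeries F} (h : constantCoeff α ≠ 0) (hγ : α * γ = 1) :
    α⁻¹ = γ := by
  have h1 : α * α⁻¹ = 1 := PowerSeries.mul_inv_cancel α h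
  calc α⁻¹ = α⁻¹ * (α * γ) := by rw [hγ, mul_one]
    _ = (α * α⁻¹) * γ := by ring
    _ = γ := by rw [h1, one_mul]

lemma ps_cc_inv_ne_zero {α : PowerSeries F} (h : constantCoeff α ≠ 0) :
    constantCoeff α⁻¹ ≠ 0 := by
  have h1 : α * α⁻¹ = 1 := PowerSeries.mul_inv_cancel α h
  intro h2
  have := congrArg (constantCoeff) h1
  rw [map_mul, h2, mul_zero, map_one] at this
  exact zero_ne_one this

lemma ps_inv_inv {α : PowerSeries F} (h : constantCoeff α ≠ 0) : (α⁻¹)⁻¹ = α :=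
  ps_inv_unique (ps_cc_inv_ne_zero h) (by
    rw [mul_comm]; exact PowerSeries.mul_inv_cancel α h)

lemma ps_inv_mul {α₁ α₂ : PowerSeries F} (h1 : constantCoeff α₁ ≠ 0)
    (h2 : constantCoeff α₂ ≠ 0) : (α₁ * α₂)⁻¹ = α₁⁻¹ * α₂⁻¹ :=
  ps_inv_unique (by rw [map_mul]; exact mul_ne_zero h1 h2) (by
    have e1 := PowerSeries.mul_inv_cancel α₁ h1
    have e2 := PowerSeries.mul_inv_cancel α₂ h2
    calc α₁ * α₂ * (α₁⁻¹ * α₂⁻¹) = (α₁ * α₁⁻¹) * (α₂ * α₂⁻¹) := by ring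
      _ = 1 := by rw [e1, e2, mul_one])

lemma ps_inv_one : ((1 : PowerSeries F))⁻¹ = 1 :=
  ps_inv_unique (by simp) (by simp)


/-- The affine map as a permutation. -/
noncomputable def affEquiv (α β : PowerSeries F) (h : constantCoeff α ≠ 0) :
    Equiv.Perm (List F) where
  toFun := affWord α β
  invFun := affWord α⁻¹ (-(α⁻¹ * β))
  left_inv w := by
    rw [affWord_comp, show α⁻¹ * α = 1 from by
        rw [mul_comm]; exact PowerSeries.mul_inv_cancel α h,
      add_neg_cancel, affWord_id]
  right_inv w := by
    rw [affWord_comp, show α * -(α⁻¹ * β) + β = -(α * α⁻¹ * β) + β from by ring,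
      PowerSeries.mul_inv_cancel α h, one_mul, neg_add_cancel, affWord_id]



lemma coe_affEquiv (α β : PowerSeries F) (h : constantCoeff α ≠ 0) :
    ⇑(affEquiv α β h) = affWord α β := rfl

lemma coe_affEquiv_symm (α β : PowerSeries F) (h : constantCoeff α ≠ 0) :
    ⇑(affEquiv α β h).symm = affWord α⁻¹ (-(α⁻¹ * β)) := rfl

lemma symm_eq_of_coe {g : Equiv.Perm (List F)} {α β : PowerSeries F}
    (h : constantCoeff α ≠ 0) (hg : ⇑g = affWord α β) :
    ⇑g⁻¹ = affWord α⁻¹ (-(α⁻¹ * β)) := by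
  have : g = affEquiv α β h := by
    ext w; rw [hg]; rfl
  rw [this]
  rfl

/-- membership of an affEquiv in AGLSet -/
lemma affEquiv_mem {α β : PowerSeries F} (h : constantCoeff α ≠ 0)
    (hα : α ∈ Rset f) (hαi : α⁻¹ ∈ Rset f) (hβ : β ∈ Rset f) :
    affEquiv α β h ∈ AGLSet f :=
  ⟨α, β, h, hα, hαi, hβ, rfl⟩

noncomputable def aglGroup (f : Polynomial F) : Subgroup (Equiv.Perm (List F)) where
  carrier := AGLSet f
  one_mem' := ⟨1, 0, by simp, Rset_one, by rw [ps_inv_one]; exact Rset_one, Rset_zero, by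
    funext w; simp [affWord_id]⟩
  mul_mem' := by
    rintro a b ⟨α₁, β₁, h1, hα1, hαi1, hβ1, hc1⟩ ⟨α₂, β₂, h2, hα2, hαi2, hβ2, hc2⟩
    refine ⟨α₁ * α₂, α₁ * β₂ + β₁, by rw [map_mul]; exact mul_ne_zero h1 h2,
      Rset_mul hα1 hα2, ?_, Rset_add (Rset_mul hα1 hβ2) hβ1, ?_⟩
    · rw [ps_inv_mul h1 h2]; exact Rset_mul hαi1 hαi2
    · funext w
      show a (b w) = _
      rw [hc2]
      have := congrFun hc1 (affWord α₂ β₂ w)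
      rw [this, affWord_comp]
  inv_mem' := by
    rintro a ⟨α, β, h, hα, hαi, hβ, hc⟩
    refine ⟨α⁻¹, -(α⁻¹ * β), ps_cc_inv_ne_zero h, hαi, ?_, Rset_neg (Rset_mul hαi hβ), ?_⟩
    · rw [ps_inv_inv h]; exact hα
    · exact symm_eq_of_coe h hc

lemma coe_aglGroup : ((aglGroup f : Subgroup (Equiv.Perm (List F))) : Set (Equiv.Perm (List F))) = AGLSet f := rfl


lemma affWord_empty (α β : PowerSeries F) : affWord α β [] = [] := by
  simp [affWord]

lemma affWord_concat (α β : PowerSeries F) (u : List F) (x : F) :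
    affWord α β (u ++ [x])
      = affWord α β u ++ [PowerSeries.coeff u.length (α * wordToSeries (u ++ [x]) + β)] := by
  refine List.ext_getElem (by simp [length_affWord]) fun i h1 h2 => ?_
  rw [getElem_affWord]
  by_cases h : i < u.length
  · rw [List.getElem_append_left (by rwa [length_affWord]), getElem_affWord]
    rw [map_add, map_add]
    congr 1
    refine coeff_mul_congr _ _ _ _ fun j hj => ?_
    rw [coeff_wordToSeries, coeff_wordToSeries,
      List.getD_eq_getElem _ _ (by rw [List.length_append]; omega),
      List.getD_eq_getElem _ _ (by omega), List.getElem_append_left (by omega)]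
  · have hi : i = u.length := by
      have := h1; rw [length_affWord, List.length_append] at this
      simp at this; omega
    rw [List.getElem_concat_length (by rw [length_affWord]; omega), hi]

lemma isTreeAut_of_mem {g : Equiv.Perm (List F)} (hg : g ∈ AGLSet f) :
    g [] = [] ∧ ∀ (u : List F) (x : F), ∃ y : F, g (u ++ [x]) = g u ++ [y] := by
  obtain ⟨α, β, h, hα, hαi, hβ, hc⟩ := hg
  constructor
  · rw [show g [] = affWord α β [] from congrFun hc [], affWord_empty]
  · intro u x
    refine ⟨PowerSeries.coeff u.length (α * wordToSeries (u ++ [x]) + β), ?_⟩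
    rw [show g (u ++ [x]) = affWord α β (u ++ [x]) from congrFun hc _,
      show g u = affWord α β u from congrFun hc _, affWord_concat]

/-- state realized in the group -/
lemma state_mem {g : Equiv.Perm (List F)} (hg : g ∈ AGLSet f) (u : List F) :
    ∃ g' : Equiv.Perm (List F), g' ∈ AGLSet f ∧ ⇑g' = state (⇑g) u ∧
      ∃ δ : PowerSeries F, ⇑(g'⁻¹ * g) = affWord 1 δ := by
  obtain ⟨α, β, h, hα, hαi, hβ, hc⟩ := hg
  set β' := shiftk u.length (α * wordToSeries u + β) with hβ'
  have hβ'R : β' ∈ Rset f :=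
    Rset_shiftk _ (Rset_add (Rset_mul hα (Rset_wordToSeries u)) hβ)
  refine ⟨affEquiv α β' h, affEquiv_mem h hα hαi hβ'R, ?_, ?_⟩
  · rw [coe_affEquiv, hc, state_affWord]
  · refine ⟨α⁻¹ * β + -(α⁻¹ * β'), ?_⟩
    funext w
    show (affEquiv α β' h)⁻¹ (g w) = _
    have hsymm : ⇑(affEquiv α β' h)⁻¹ = affWord α⁻¹ (-(α⁻¹ * β')) := rfl
    rw [show g w = affWord α β w from congrFun hc w, show ((affEquiv α β' h)⁻¹ : Equiv.Perm (List F)) (affWord α β w) = affWord α⁻¹ (-(α⁻¹ * β')) (affWord α β w) from congrFun hsymm _, affWord_comp,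
      show α⁻¹ * α = 1 from by rw [mul_comm]; exact PowerSeries.mul_inv_cancel α h]

lemma pow_translation {h : Equiv.Perm (List F)} {δ : PowerSeries F}
    (hh : ⇑h = affWord 1 δ) (n : ℕ) : ⇑(h ^ n) = affWord 1 (n • δ) := by
  induction n with
  | zero =>
    funext w
    simp [affWord_id]
  | succ n ih =>
    funext w
    rw [pow_succ]
    show (h ^ n) (h w) = _
    rw [show h w = affWord 1 δ w from congrFun hh w,
      show (h ^ n) (affWord 1 δ w) = affWord 1 (n • δ) (affWord 1 δ w) from congrFun ih _,
      affWord_comp, one_mul, one_mul, succ_nsmul, add_comm (n • δ) δ]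

lemma finOrder_translation [Fintype F] {h : Equiv.Perm (List F)} {δ : PowerSeries F}
    (hh : ⇑h = affWord 1 δ) : IsOfFinOrder h := by
  rw [isOfFinOrder_iff_pow_eq_one]
  refine ⟨Fintype.card F, Fintype.card_pos, ?_⟩
  have hδ : (Fintype.card F) • δ = 0 := by
    ext n
    rw [map_nsmul, nsmul_eq_mul, map_zero]
    have : ((Fintype.card F : F)) = 0 := FiniteField.cast_card_eq_zero F
    rw [this, zero_mul]
  ext w
  rw [show (h ^ Fintype.card F) w = affWord 1 ((Fintype.card F) • δ) w from
    congrFun (pow_translation hh _) w, hδ, affWord_id]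
  rfl


lemma coeff_mul_eq_zero (s t : PowerSeries F) {A B n : ℕ}
    (hs : ∀ i, A < i → coeff i s = 0) (ht : ∀ j, B ≤ j → coeff j t = 0)
    (hn : A + B < n) : coeff n (s * t) = 0 := by
  rw [coeff_mul]
  refine Finset.sum_eq_zero fun p hp => ?_
  rw [Finset.HasAntidiagonal.mem_antidiagonal] at hp
  by_cases hA : A < p.1
  · rw [hs _ hA, zero_mul]
  · rw [ht _ (by omega), mul_zero]

lemma finiteState_of_mem [Fintype F] {f : Polynomial F} (hf : f ≠ 0) {g : Equiv.Perm (List F)}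
    (hg : g ∈ AGLSet f) : FiniteStateFun ⇑g := by
  obtain ⟨α, β, h, hα, hαi, hβ, hc⟩ := hg
  obtain ⟨m1, a0, ha⟩ := hα
  obtain ⟨m2, b0, hb⟩ := hβ
  set m := m1 + m2 with hm
  set a : Polynomial F := f ^ m2 * a0 with ha'
  set b : Polynomial F := f ^ m1 * b0 with hb'
  have hfa : (f : PowerSeries F) ^ m * α = (a : PowerSeries F) := by
    rw [ha', Polynomial.coe_mul, Polynomial.coe_pow, ← ha, hm, pow_add]; ring
  have hfb : (f : PowerSeries F) ^ m * β = (b : PowerSeries F) := by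
    rw [hb', Polynomial.coe_mul, Polynomial.coe_pow, ← hb, hm, pow_add]; ring
  set N := a.natDegree + b.natDegree + (f ^ m).natDegree with hN
  set T : Set (PowerSeries F) :=
    {γ | ∀ n, N < n → coeff n ((f : PowerSeries F) ^ m * γ) = 0} with hT
  have hfm : ((f : PowerSeries F)) ^ m ≠ 0 := by
    apply pow_ne_zero
    rwa [Ne, Polynomial.coe_eq_zero_iff]
  have hTfin : T.Finite := by
    refine Set.Finite.of_finite_image (f := fun γ => fun i : Fin (N + 1) =>
      coeff i ((f : PowerSeries F) ^ m * γ)) (Set.toFinite _) ?_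
    intro γ1 h1 γ2 h2 he
    refine mul_left_cancel₀ hfm (PowerSeries.ext fun n => ?_)
    by_cases hn : n ≤ N
    · exact congrFun he ⟨n, by omega⟩
    · rw [h1 n (by omega), h2 n (by omega)]
  have hmem : ∀ u : List F, shiftk u.length (α * wordToSeries u + β) ∈ T := by
    intro u
    set k := u.length with hk
    set s := α * wordToSeries u + β with hs
    set γ := shiftk k s with hγ
    intro n hn
    have decomp : (f : PowerSeries F) ^ m * s
        = (f : PowerSeries F) ^ m * ((trunc k s : Polynomial F) : PowerSeries F)
          + (X : PowerSeries F) ^ k * ((f : PowerSeries F) ^ m * γ) := by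
      conv_lhs => rw [← trunc_add_shiftk k s]
      ring
    have hcoeff := congrArg (coeff (k + n)) decomp
    rw [map_add, coeff_X_pow_mul', if_pos (by omega),
      show k + n - k = n by omega] at hcoeff
    have hA : coeff (k + n) ((f : PowerSeries F) ^ m * s) = 0 := by
      have : (f : PowerSeries F) ^ m * s
          = (a : PowerSeries F) * wordToSeries u + (b : PowerSeries F) := by
        rw [hs, ← hfa, ← hfb]; ring
      rw [this, map_add]
      rw [coeff_mul_eq_zero _ _
        (fun i (hi : a.natDegree < i) => by
          rw [Polynomial.coeff_coe]; exact Polynomial.coeff_eq_zero_of_natDegree_lt hi)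
        (fun j (hj : k ≤ j) => by
          rw [coeff_wordToSeries]; exact List.getD_eq_default u 0 (n := j) (by omega))
        (by omega)]
      rw [Polynomial.coeff_coe, Polynomial.coeff_eq_zero_of_natDegree_lt (by omega), add_zero]
    have hB : coeff (k + n)
        ((f : PowerSeries F) ^ m * ((trunc k s : Polynomial F) : PowerSeries F)) = 0 := by
      rw [← Polynomial.coe_pow]
      exact coeff_mul_eq_zero _ _
        (fun i (hi : (f ^ m).natDegree < i) => by
          rw [Polynomial.coeff_coe]; exact Polynomial.coeff_eq_zero_of_natDegree_lt hi)
        (fun j (hj : k ≤ j) => by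
          rw [Polynomial.coeff_coe, coeff_trunc, if_neg (by omega)])
        (by omega)
    rw [hA, hB, zero_add] at hcoeff
    exact hcoeff.symm
  apply Set.Finite.subset (hTfin.image fun γ => affWord α γ)
  rintro g' ⟨u, rfl⟩
  exact ⟨shiftk u.length (α * wordToSeries u + β), hmem u, by rw [hc, state_affWord]⟩


end Aux

/-- Let `F` be a finite field, `f ∈ F[X]` with `f(0) ≠ 0`, and
`R = F[X][1/f] ⊆ F⟦X⟧`.  Then `G = { AffMap (α, β) : β ∈ R, α a unit of R }` is a subgroup
of `Aut(T_F)` which is self-similar, coarsely diagonal, and finite-state. -/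
theorem aglOfSIntegers_selfSimilar_coarselyDiagonal_finiteState
    {F : Type*} [Field F] [Fintype F] (f : Polynomial F) (hf : f.eval 0 ≠ 0) :
    (∃ G : Subgroup (Equiv.Perm (List F)), (G : Set (Equiv.Perm (List F))) = AGLSet f) ∧
    ∀ G : Subgroup (Equiv.Perm (List F)), (G : Set (Equiv.Perm (List F))) = AGLSet f →
      IsTreeAutGroup G ∧ SelfSimilar G ∧ CoarselyDiagonal G ∧ FiniteStateGroup G := by
  have hf0 : f ≠ 0 := fun h0 => hf (by rw [h0]; simp)
  have hmem : ∀ (G : Subgroup (Equiv.Perm (List F))),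
      (G : Set (Equiv.Perm (List F))) = AGLSet f →
      ∀ g : Equiv.Perm (List F), g ∈ G ↔ g ∈ AGLSet f := by
    intro G hG g
    rw [← SetLike.mem_coe, hG]
  refine ⟨⟨aglGroup f, rfl⟩, fun G hG => ⟨?_, ?_, ?_, ?_⟩⟩
  · intro g hg
    exact isTreeAut_of_mem ((hmem G hG g).1 hg)
  · intro g hg u
    obtain ⟨g', hg', hcoe, _⟩ := state_mem ((hmem G hG g).1 hg) u
    exact ⟨g', (hmem G hG g').2 hg', hcoe⟩
  · intro g hg u
    obtain ⟨g', hg', hcoe, δ, hδ⟩ := state_mem ((hmem G hG g).1 hg) u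
    exact ⟨g', (hmem G hG g').2 hg', hcoe, finOrder_translation hδ⟩
  · intro g hg
    exact finiteState_of_mem hf0 ((hmem G hG g).1 hg)


end RoverNekrashevych
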